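/- Let Z be a PID with fraction field Q, P_1,...,P_s ∈ Z[y] nonzero with no common divisor in Q[y], and for m ∈ Z set d_m = gcd(P_1(m),...,P_s(m)). Then the set D* = {d_m : m ∈ Z} is stable under gcd: for all m, m' ∈ Z there exists m'' ∈ Z such that d_{m''} is an associate of gcd(d_m, d_{m'}). -/

import Mathlib

open Polynomial UniqueFactorizationMonoid

-- prime power dvd criterion
theorem aux_dvd_of_pow {Z : Type*} [CommRing Z] [IsDomain Z] [IsPrincipalIdealRing Z]
    {x y : Z} (hx : x ≠ 0) (hy : y ≠ 0)
    (h : ∀ p k, Prime p → p ^ k ∣ x → p ^ k ∣ y) : x ∣ y := by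
  classical
  letI : NormalizationMonoid Z := UniqueFactorizationMonoid.normalizationMonoid.toNormalizationMonoid
  rw [UniqueFactorizationMonoid.dvd_iff_normalizedFactors_le_normalizedFactors hx hy,
    Multiset.le_iff_count]
  intro p
  by_cases hp : p ∈ normalizedFactors x
  · have hpp : Prime p := prime_of_normalized_factor p hp
    have hnorm : normalize p = p := normalize_normalized_factor p hp
    set k := (normalizedFactors x).count p with hk
    have h1 : p ^ k ∣ x := by
      apply pow_dvd_of_le_emultiplicity
      rw [emultiplicity_eq_count_normalizedFactors hpp.irreducible hx, hnorm]
    have h2 := h p k hpp h1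
    have h3 := le_emultiplicity_of_pow_dvd h2
    rw [emultiplicity_eq_count_normalizedFactors hpp.irreducible hy, hnorm] at h3
    exact_mod_cast h3
  · simp [Multiset.count_eq_zero_of_notMem hp]

-- bound on exponents
theorem aux_pow_le_card {Z : Type*} [CommRing Z] [IsDomain Z] [IsPrincipalIdealRing Z]
    [NormalizationMonoid Z]
    {p c : Z} {k : ℕ} (hp : Prime p) (hc : c ≠ 0) (h : p ^ k ∣ c) :
    k ≤ (normalizedFactors c).card := by
  have h1 := (le_emultiplicity_iff_replicate_le_normalizedFactors hp.irreducible hc).mp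
    (le_emultiplicity_of_pow_dvd h)
  simpa using Multiset.card_le_card h1

-- exact multiplicity
theorem aux_exists_mult {Z : Type*} [CommRing Z] [IsDomain Z] [IsPrincipalIdealRing Z]
    {p e : Z} (hp : Prime p) (he : e ≠ 0) : ∃ k, p ^ k ∣ e ∧ ¬ p ^ (k+1) ∣ e := by
  classical
  letI : NormalizationMonoid Z := UniqueFactorizationMonoid.normalizationMonoid.toNormalizationMonoid
  have hex : ∃ k, ¬ p ^ (k+1) ∣ e := by
    refine ⟨(normalizedFactors e).card, fun hd => ?_⟩
    have := aux_pow_le_card hp he hd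
    omega
  refine ⟨Nat.find hex, ?_, Nat.find_spec hex⟩
  rcases Nat.eq_zero_or_pos (Nat.find hex) with h0 | h0
  · simp [h0]
  · have := Nat.find_min hex (m := Nat.find hex - 1) (by omega)
    rw [not_not] at this
    convert this using 2
    omega

-- finite family gcd via PID
theorem aux_fin_gcd {Z : Type*} [CommRing Z] [IsDomain Z] [IsPrincipalIdealRing Z]
    {n : ℕ} (f : Fin n → Z) : ∃ g : Z, (∀ i, g ∣ f i) ∧ ∃ w : Fin n → Z, ∑ i, w i * f i = g := by
  obtain ⟨g, hg⟩ := Submodule.IsPrincipal.principal (Ideal.span (Set.range f))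
  refine ⟨g, fun i => ?_, ?_⟩
  · have hmem : f i ∈ Ideal.span (Set.range f) := Ideal.subset_span ⟨i, rfl⟩
    rw [hg] at hmem
    exact Ideal.mem_span_singleton.mp hmem
  · have : g ∈ Ideal.span (Set.range f) := by
      rw [hg]; exact Ideal.mem_span_singleton_self g
    rw [Ideal.span, Submodule.mem_span_range_iff_exists_fun] at this
    obtain ⟨w, hw⟩ := this
    exact ⟨w, by simpa [smul_eq_mul] using hw⟩

-- binary
theorem aux_pair_gcd {Z : Type*} [CommRing Z] [IsDomain Z] [IsPrincipalIdealRing Z]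
    (x y : Z) : ∃ g u v : Z, u * x + v * y = g ∧ g ∣ x ∧ g ∣ y := by
  obtain ⟨g, hg⟩ := Submodule.IsPrincipal.principal (Ideal.span ({x, y} : Set Z))
  have hx : g ∣ x := by
    have hmem : x ∈ Ideal.span ({x, y} : Set Z) := Ideal.subset_span (by simp)
    rw [hg] at hmem
    exact Ideal.mem_span_singleton.mp hmem
  have hy : g ∣ y := by
    have hmem : y ∈ Ideal.span ({x, y} : Set Z) := Ideal.subset_span (by simp)
    rw [hg] at hmem
    exact Ideal.mem_span_singleton.mp hmem
  have : g ∈ Ideal.span ({x, y} : Set Z) := by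
    rw [hg]; exact Ideal.mem_span_singleton_self g
  obtain ⟨u, v, huv⟩ := Ideal.mem_span_pair.mp this
  exact ⟨g, u, v, huv, hx, hy⟩

theorem aux_comb {Z : Type*} [CommRing Z] [IsDomain Z] [IsPrincipalIdealRing Z]
    (s : ℕ) (P : Fin s → Polynomial Z)
    (hcop : ∀ d : Polynomial (FractionRing Z),
      (∀ i, d ∣ (P i).map (algebraMap Z (FractionRing Z))) → IsUnit d) :
    ∃ c : Z, c ≠ 0 ∧ ∃ V : Fin s → Polynomial Z, ∑ i, V i * P i = C c := by
  classical
  set K := FractionRing Z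
  set f : Fin s → K[X] := fun i => (P i).map (algebraMap Z K) with hf
  obtain ⟨g, hg⟩ := Submodule.IsPrincipal.principal (Ideal.span (Set.range f))
  have hgu : IsUnit g := by
    apply hcop
    intro i
    have hmem : f i ∈ Ideal.span (Set.range f) := Ideal.subset_span ⟨i, rfl⟩
    rw [hg] at hmem
    exact Ideal.mem_span_singleton.mp hmem
  have htop : Ideal.span (Set.range f) = ⊤ := by
    rw [hg]; exact Ideal.span_singleton_eq_top.mpr hgu
  have h1 : (1 : K[X]) ∈ Ideal.span (Set.range f) := htop ▸ Submodule.mem_top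
  rw [Ideal.span, Submodule.mem_span_range_iff_exists_fun] at h1
  obtain ⟨q, hq⟩ := h1
  have hq' : ∑ i, q i * f i = 1 := by simpa [smul_eq_mul] using hq
  choose b hb using fun i =>
    IsLocalization.integerNormalization_map_to_map (nonZeroDivisors Z) (q i)
  set N : Fin s → Polynomial Z :=
    fun i => IsLocalization.integerNormalization (nonZeroDivisors Z) (q i) with hN
  refine ⟨∏ i, (b i : Z), ?_, fun i => (∏ j ∈ Finset.univ.erase i, (b j : Z)) • N i, ?_⟩
  · exact Finset.prod_ne_zero_iff.mpr fun i _ => nonZeroDivisors.coe_ne_zero (b i)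
  · apply Polynomial.map_injective (algebraMap Z K) (IsFractionRing.injective Z K)
    rw [Polynomial.map_sum, Polynomial.map_C]
    have hterm : ∀ i ∈ Finset.univ, (((∏ j ∈ Finset.univ.erase i, (b j : Z)) • N i) * P i).map (algebraMap Z K)
        = C (algebraMap Z K (∏ j, (b j : Z))) * (q i * f i) := by
      intro i _
      rw [Polynomial.map_mul, Polynomial.smul_eq_C_mul, Polynomial.map_mul, Polynomial.map_C, hb i,
        Algebra.smul_def, Polynomial.algebraMap_apply,
        ← Finset.prod_erase_mul _ (fun j => ((b j : Z))) (Finset.mem_univ i), map_mul,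
        Polynomial.C_mul]
      ring
    rw [Finset.sum_congr rfl hterm, ← Finset.mul_sum, hq', mul_one]

theorem stmt_18 {Z : Type*} [CommRing Z] [IsDomain Z] [IsPrincipalIdealRing Z]
    (s : ℕ) (P : Fin s → Polynomial Z) (hP0 : ∀ i, P i ≠ 0)
    (hcop : ∀ d : Polynomial (FractionRing Z),
      (∀ i, d ∣ (P i).map (algebraMap Z (FractionRing Z))) → IsUnit d) :
    ∀ m m' : Z, ∃ m'' : Z, ∀ d : Z,
      (∀ i, d ∣ (P i).eval m'') ↔
      ((∀ i, d ∣ (P i).eval m) ∧ (∀ i, d ∣ (P i).eval m')) := by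
  classical
  intro m m'
  obtain ⟨c, hc0, V, hV⟩ := aux_comb s P hcop
  have key : ∀ (t d : Z), (∀ i, d ∣ (P i).eval t) → d ∣ c := by
    intro t d hd
    have h1 : (∑ i, V i * P i).eval t = c := by rw [hV, eval_C]
    rw [eval_finset_sum] at h1
    refine h1 ▸ Finset.dvd_sum fun i _ => ?_
    rw [eval_mul]
    exact (hd i).mul_left _
  obtain ⟨gm, hgm, wm, hwm⟩ := aux_fin_gcd (fun i => (P i).eval m)
  obtain ⟨gm', hgm', wm', hwm'⟩ := aux_fin_gcd (fun i => (P i).eval m')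
  have hdm : ∀ d : Z, (∀ i, d ∣ (P i).eval m) ↔ d ∣ gm := by
    intro d
    exact ⟨fun h => hwm ▸ Finset.dvd_sum fun i _ => (h i).mul_left _,
      fun h i => h.trans (hgm i)⟩
  have hdm' : ∀ d : Z, (∀ i, d ∣ (P i).eval m') ↔ d ∣ gm' := by
    intro d
    exact ⟨fun h => hwm' ▸ Finset.dvd_sum fun i _ => (h i).mul_left _,
      fun h i => h.trans (hgm' i)⟩
  have hgmc : gm ∣ c := key m gm hgm
  have hgmc' : gm' ∣ c := key m' gm' hgm'
  have hgm0 : gm ≠ 0 := fun h => hc0 (zero_dvd_iff.mp (h ▸ hgmc))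
  have hgm0' : gm' ≠ 0 := fun h => hc0 (zero_dvd_iff.mp (h ▸ hgmc'))
  obtain ⟨g, u0, v0, hguv, hggm, hggm'⟩ := aux_pair_gcd gm gm'
  have hg0 : g ≠ 0 := fun h => hgm0 (zero_dvd_iff.mp (h ▸ hggm))
  have hgdvd : ∀ d : Z, d ∣ gm → d ∣ gm' → d ∣ g := fun d h1 h2 => by
    rw [← hguv]; exact dvd_add (h1.mul_left _) (h2.mul_left _)
  obtain ⟨a, ha⟩ := hggm
  have hggm : g ∣ gm := ⟨a, ha⟩
  obtain ⟨bb, hbb⟩ := hggm'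
  have hggm' : g ∣ gm' := ⟨bb, hbb⟩
  letI : NormalizationMonoid Z := UniqueFactorizationMonoid.normalizationMonoid.toNormalizationMonoid
  set n := (normalizedFactors c).card with hn
  obtain ⟨e, x0, y0, hexy, hec, hean⟩ := aux_pair_gcd c (a ^ n)
  have hedvd : ∀ d : Z, d ∣ c → d ∣ a ^ n → d ∣ e := fun d h1 h2 => by
    rw [← hexy]; exact dvd_add (h1.mul_left _) (h2.mul_left _)
  have he0 : e ≠ 0 := fun h => hc0 (zero_dvd_iff.mp (h ▸ hec))
  obtain ⟨Pp, hPp⟩ := hec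
  have hpe_pa : ∀ p : Z, Prime p → p ∣ e → p ∣ a := fun p hp hdvd =>
    hp.dvd_of_dvd_pow (hdvd.trans hean)
  have hfactP : ∀ p k, Prime p → ¬ p ∣ a → p ^ k ∣ c → p ^ k ∣ Pp := by
    intro p k hp hpa hpkc
    have hpne : ¬ p ∣ e := fun hpe => hpa (hpe_pa p hp hpe)
    exact hp.pow_dvd_of_dvd_mul_left k hpne (by rwa [← hPp])
  have hfactE : ∀ p k, Prime p → p ∣ a → p ^ k ∣ c → p ^ k ∣ e := by
    intro p k hp hpa hpkc
    exact hedvd _ hpkc ((pow_dvd_pow p (aux_pow_le_card hp hc0 hpkc)).trans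
      (pow_dvd_pow_of_dvd hpa n))
  -- coprimality of Pp and e
  obtain ⟨t, ut, vt, htuv, htP, hte⟩ := aux_pair_gcd Pp e
  have htu : IsUnit t := by
    by_contra hnu
    have ht0 : t ≠ 0 := fun h => he0 (zero_dvd_iff.mp (h ▸ hte))
    obtain ⟨p, hp, hpt⟩ := WfDvdMonoid.exists_irreducible_factor hnu ht0
    have hp' : Prime p := UniqueFactorizationMonoid.irreducible_iff_prime.mp hp
    have hpe : p ∣ e := hpt.trans hte
    have hpP : p ∣ Pp := hpt.trans htP
    obtain ⟨k, hk1, hk2⟩ := aux_exists_mult hp' he0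
    apply hk2
    apply hfactE p (k+1) hp' (hpe_pa p hp' hpe)
    rw [hPp]
    calc p ^ (k+1) = p ^ k * p := by ring
    _ ∣ e * Pp := mul_dvd_mul hk1 hpP
  have hcomb : ∃ x y : Z, x * Pp + y * e = 1 := by
    rcases htu with ⟨u, hu⟩
    refine ⟨(↑u⁻¹ : Z) * ut, (↑u⁻¹ : Z) * vt, ?_⟩
    calc (↑u⁻¹ : Z) * ut * Pp + (↑u⁻¹ : Z) * vt * e = (↑u⁻¹ : Z) * (ut * Pp + vt * e) := by ring
    _ = (↑u⁻¹ : Z) * t := by rw [htuv]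
    _ = 1 := by rw [← hu, Units.inv_mul]
  obtain ⟨x, y, hxy⟩ := hcomb
  set M : Z := m + (m' - m) * (x * Pp) with hM
  have hPm : Pp ∣ M - m := ⟨(m' - m) * x, by rw [hM]; ring⟩
  have hEm : e ∣ M - m' := by
    refine ⟨(m - m') * y, ?_⟩
    have hx' : x * Pp = 1 - y * e := by linear_combination hxy
    rw [hM, hx']
    ring
  have evtrans : ∀ (t1 t2 d : Z), d ∣ t1 - t2 →
      ∀ i, (d ∣ (P i).eval t1 ↔ d ∣ (P i).eval t2) := by
    intro t1 t2 d hd i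
    have hdd : d ∣ (P i).eval t1 - (P i).eval t2 := hd.trans (sub_dvd_eval_sub t1 t2 (P i))
    constructor
    · intro h1; simpa using dvd_sub h1 hdd
    · intro h2; simpa using dvd_add hdd h2
  obtain ⟨gM, hgM, wM, hwM⟩ := aux_fin_gcd (fun i => (P i).eval M)
  have hdM : ∀ d : Z, (∀ i, d ∣ (P i).eval M) ↔ d ∣ gM := by
    intro d
    exact ⟨fun h => hwM ▸ Finset.dvd_sum fun i _ => (h i).mul_left _,
      fun h i => h.trans (hgM i)⟩
  have hgMc : gM ∣ c := key M gM hgM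
  have hgM0 : gM ≠ 0 := fun h => hc0 (zero_dvd_iff.mp (h ▸ hgMc))
  -- main direction 2 : g ∣ gM
  have main2 : g ∣ gM := by
    apply aux_dvd_of_pow hg0 hgM0
    intro p k hp hpk
    have hpkgm : p ^ k ∣ gm := hpk.trans hggm
    have hpkgm' : p ^ k ∣ gm' := hpk.trans hggm'
    have hpkc : p ^ k ∣ c := hpkgm.trans hgmc
    by_cases hpa : p ∣ a
    · exact (hdM _).mp fun i =>
        (evtrans M m' _ ((hfactE p k hp hpa hpkc).trans hEm) i).mpr
          (hpkgm'.trans (hgm' i))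
    · exact (hdM _).mp fun i =>
        (evtrans M m _ ((hfactP p k hp hpa hpkc).trans hPm) i).mpr
          (hpkgm.trans (hgm i))
  -- main direction 1 : gM ∣ g
  have main1 : gM ∣ g := by
    apply aux_dvd_of_pow hgM0 hg0
    intro p k hp hpk
    have hpkc : p ^ k ∣ c := hpk.trans hgMc
    by_cases hpa : p ∣ a
    · have hpkgm' : p ^ k ∣ gm' := (hdm' _).mp fun i =>
        (evtrans M m' _ ((hfactE p k hp hpa hpkc).trans hEm) i).mp ((hdM _).mpr hpk i)
      have hpb : ¬ p ∣ bb := by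
        intro hpb
        have h1 : g * p ∣ gm := ha ▸ mul_dvd_mul_left g hpa
        have h2 : g * p ∣ gm' := hbb ▸ mul_dvd_mul_left g hpb
        have h3 : g * p ∣ g * 1 := by rw [mul_one]; exact hgdvd _ h1 h2
        exact hp.not_unit (isUnit_of_dvd_one ((mul_dvd_mul_iff_left hg0).mp h3))
      exact hp.pow_dvd_of_dvd_mul_right k hpb (hbb ▸ hpkgm')
    · have hpkgm : p ^ k ∣ gm := (hdm _).mp fun i =>
        (evtrans M m _ ((hfactP p k hp hpa hpkc).trans hPm) i).mp ((hdM _).mpr hpk i)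
      exact hp.pow_dvd_of_dvd_mul_right k hpa (ha ▸ hpkgm)
  refine ⟨M, fun d => ?_⟩
  constructor
  · intro hAll
    have hdg : d ∣ g := ((hdM d).mp hAll).trans main1
    exact ⟨fun i => (hdg.trans hggm).trans (hgm i), fun i => (hdg.trans hggm').trans (hgm' i)⟩
  · rintro ⟨h1, h2⟩
    exact (hdM d).mpr (((hgdvd d ((hdm d).mp h1) ((hdm' d).mp h2)).trans main2))
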